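/- Let b ≥ 1 and 0 < m ≤ M, and set q = m^{1/(2^b+1)} · M^{2^b/(2^b+1)}. For every price sequence σ of length n ≥ 1 with all prices in [m, M], if max_k σ k ≥ q, then max_k σ k ≤ (M/m)^{1/(2^b+1)} · profit(RPP(q), σ). -/

import Mathlib

/-- The maximum price of a price sequence of positive length. -/
noncomputable def maxPrice {n : ℕ} (hn : 0 < n) (σ : Fin n → ℝ) : ℝ :=
  Finset.univ.sup' ⟨⟨0, hn⟩, Finset.mem_univ _⟩ σ

/-- The profit of the reservation-price strategy `RPP p` on the price sequence
`σ`: it accepts at the least index `k` with `σ k ≥ p`, obtaining `σ k`; if no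
such index exists it must accept the last price `σ (n-1)`. -/
noncomputable def rppProfit {n : ℕ} (hn : 0 < n) (p : ℝ) (σ : Fin n → ℝ) : ℝ :=
  if h : ∃ k : Fin n, p ≤ σ k then
    σ ((Finset.univ.filter (fun k : Fin n => p ≤ σ k)).min'
      (h.imp fun k hk => Finset.mem_filter.mpr ⟨Finset.mem_univ _, hk⟩))
  else σ ⟨n - 1, Nat.sub_lt hn one_pos⟩

/-- (Second case of the upper-bound proof.) With
`q = m^{1/(2^b+1)} M^{2^b/(2^b+1)}`, if the maximum price of `σ` is at least `q`,
then `RPP(q)` is `(M/m)^{1/(2^b+1)}`-competitive on `σ`. -/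
theorem rpp_competitive_above_last_reservation_price
    (b : ℕ) (hb : 1 ≤ b) (m M : ℝ) (hm : 0 < m) (hmM : m ≤ M)
    (n : ℕ) (hn : 0 < n) (σ : Fin n → ℝ) (hσ : ∀ i, m ≤ σ i ∧ σ i ≤ M)
    (hmax : m ^ ((1 : ℝ) / (2 ^ b + 1)) * M ^ ((2 : ℝ) ^ b / (2 ^ b + 1)) ≤ maxPrice hn σ) :
    maxPrice hn σ ≤ (M / m) ^ ((1 : ℝ) / (2 ^ b + 1)) *
      rppProfit hn (m ^ ((1 : ℝ) / (2 ^ b + 1)) * M ^ ((2 : ℝ) ^ b / (2 ^ b + 1))) σ := by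
  have hM : 0 < M := lt_of_lt_of_le hm hmM
  set N : ℝ := (2 : ℝ) ^ b + 1 with hN
  have hNpos : (0 : ℝ) < N := by positivity
  set q : ℝ := m ^ ((1 : ℝ) / N) * M ^ ((2 : ℝ) ^ b / N) with hq
  -- existence of an index with q ≤ σ k
  have hex : ∃ k : Fin n, q ≤ σ k := by
    obtain ⟨i, _, hi⟩ := Finset.exists_mem_eq_sup' (⟨⟨0, hn⟩, Finset.mem_univ _⟩ :
      (Finset.univ : Finset (Fin n)).Nonempty) σ
    exact ⟨i, by rw [← hi]; exact hmax⟩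
  have hprofit : q ≤ rppProfit hn q σ := by
    rw [rppProfit, dif_pos hex]
    have := Finset.min'_mem (Finset.univ.filter (fun k : Fin n => q ≤ σ k))
      (hex.imp fun k hk => Finset.mem_filter.mpr ⟨Finset.mem_univ _, hk⟩)
    exact (Finset.mem_filter.mp this).2
  -- key identity: (M/m)^(1/N) * q = M
  have hkey : (M / m) ^ ((1 : ℝ) / N) * q = M := by
    rw [hq, Real.div_rpow hM.le hm.le]
    rw [div_mul_eq_mul_div,
      show M ^ ((1:ℝ)/N) * (m ^ ((1:ℝ)/N) * M ^ ((2:ℝ)^b/N))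
        = (M ^ ((1:ℝ)/N) * M ^ ((2:ℝ)^b/N)) * m ^ ((1:ℝ)/N) by ring,
      mul_div_assoc, div_self (ne_of_gt (Real.rpow_pos_of_pos hm _)), mul_one]
    rw [← Real.rpow_add hM]
    rw [← add_div, hN, add_comm ((2:ℝ)^b) 1,
      div_self (by positivity : ((1:ℝ) + 2 ^ b) ≠ 0), Real.rpow_one]
  have hmaxM : maxPrice hn σ ≤ M := by
    apply Finset.sup'_le
    intro i _
    exact (hσ i).2
  calc maxPrice hn σ ≤ M := hmaxM
    _ = (M / m) ^ ((1 : ℝ) / N) * q := hkey.symm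
    _ ≤ (M / m) ^ ((1 : ℝ) / N) * rppProfit hn q σ := by
        apply mul_le_mul_of_nonneg_left hprofit
        exact Real.rpow_nonneg (by positivity) _
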